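/- Let Ω ⊂ ℝ^d be open and bounded, p ∈ (1,∞), and J : ℝ^d → [0,∞) a mollifier supported in the closed unit ball with ∫ J = 1. Let J_ε(x) = ε^{−d} J(x/ε). Suppose f_n ∈ L^p(Ω) and ρ_n ≥ c > 0 on Ω with F_ε(f_n) := ε_n^{−p} ∫_Ω ∫_Ω η_{ε_n}(|x−z|) |f_n(x) − f_n(z)|^p ρ_n(x) ρ_n(z) dx dz uniformly bounded, where J ≤ C η and ε_n → 0. Then for any Ω' compactly contained in Ω, ‖f_n − J_{ε_n} ∗ f_n‖_{L^p(Ω')}^p ≤ (C ε_n^p / c^2) F_{ε_n}(f_n), and in particular ‖f_n − J_{ε_n} ∗ f_n‖_{L^p(Ω')} → 0. -/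

import Mathlib

open MeasureTheory Set Metric ENNReal NNReal Filter Topology

variable {d : ℕ}

local notation "E" => EuclideanSpace ℝ (Fin d)

lemma aux_K_zero (e : ℝ) (he : 0 < e) (J : E → ℝ)
    (hJsupp : Function.support J ⊆ closedBall 0 1) :
    ∀ z : E, z ∉ closedBall (0:E) e → e ^ (-(d:ℝ)) * J (e⁻¹ • z) = 0 := by
  intro z hz
  have h1 : e⁻¹ • z ∉ closedBall (0:E) 1 := by
    intro h
    apply hz
    have := mem_closedBall_zero_iff.mp h
    rw [norm_smul, norm_inv, Real.norm_eq_abs, abs_of_pos he] at this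
    rw [mem_closedBall_zero_iff]
    calc ‖z‖ = e * (e⁻¹ * ‖z‖) := by field_simp
    _ ≤ e * 1 := by nlinarith [norm_nonneg z]
    _ = e := mul_one e
  have : J (e⁻¹ • z) = 0 := by
    by_contra h
    exact h1 (hJsupp (Function.mem_support.mpr h))
  rw [this, mul_zero]

lemma aux_K_int (e : ℝ) (he : 0 < e) (J : E → ℝ) (hJint : Integrable J) :
    Integrable (fun z : E => e ^ (-(d:ℝ)) * J (e⁻¹ • z)) :=
  (hJint.comp_smul (inv_ne_zero he.ne')).const_mul _

lemma aux_ball_ae (hd : 0 < d) (e : ℝ) :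
    (ball (0:E) e : Set E) =ᵐ[volume] closedBall (0:E) e := by
  haveI : Nontrivial E := by
    have : Nonempty (Fin d) := Fin.pos_iff_nonempty.mp hd
    infer_instance
  refine ae_eq_set.mpr ⟨?_, ?_⟩
  · rw [diff_eq_empty.mpr ball_subset_closedBall, measure_empty]
  · rw [closedBall_diff_ball]
    exact Measure.addHaar_sphere volume 0 e

lemma aux_K_integral (hd : 0 < d) (e : ℝ) (he : 0 < e) (J : E → ℝ)
    (hJsupp : Function.support J ⊆ closedBall 0 1) (hJint : Integrable J)
    (hJ1 : (∫ z, J z) = 1) :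
    (∫ z in ball (0:E) e, e ^ (-(d:ℝ)) * J (e⁻¹ • z)) = 1 := by
  rw [setIntegral_congr_set (aux_ball_ae hd e),
    setIntegral_eq_integral_of_forall_compl_eq_zero (aux_K_zero e he J hJsupp),
    integral_const_mul _ _, Measure.integral_comp_smul volume J e⁻¹, hJ1, smul_eq_mul, mul_one]
  have h1 : ((e⁻¹:ℝ) ^ (Module.finrank ℝ (EuclideanSpace ℝ (Fin d))))⁻¹ = e ^ (d:ℕ) := by
    rw [finrank_euclideanSpace_fin, inv_pow, inv_inv]
  rw [h1, abs_of_pos (pow_pos he d), Real.rpow_neg he.le, Real.rpow_natCast]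
  exact inv_mul_cancel₀ (pow_pos he d).ne'

lemma aux_jensen (hd : 0 < d) (e : ℝ) (he : 0 < e) (p : ℝ) (hp : 1 < p)
    (J : E → ℝ) (hJm : Measurable J) (hJ0 : ∀ z, 0 ≤ J z)
    (hJsupp : Function.support J ⊆ closedBall 0 1) (hJint : Integrable J)
    (hJ1 : (∫ z, J z) = 1)
    (f : E → ℝ) (hf : Measurable f) (x : E)
    (hK1 : (∫ z in ball (0:E) e, e ^ (-(d:ℝ)) * J (e⁻¹ • z)) = 1) :
    ENNReal.ofReal (|f x - ∫ z in ball (0:E) e, e ^ (-(d:ℝ)) * J (e⁻¹ • z) * f (x - z)| ^ p)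
      ≤ ∫⁻ z in ball (0:E) e,
          ENNReal.ofReal (e ^ (-(d:ℝ)) * J (e⁻¹ • z)) * ENNReal.ofReal (|f x - f (x - z)| ^ p) := by
  have hp0 : (0:ℝ) < p := lt_trans one_pos hp
  set K : E → ℝ := fun z => e ^ (-(d:ℝ)) * J (e⁻¹ • z) with hKdef
  have hKm : Measurable K := measurable_const.mul (hJm.comp (measurable_const_smul _))
  have hK0 : ∀ z, 0 ≤ K z := fun z =>
    mul_nonneg (Real.rpow_nonneg he.le _) (hJ0 _)
  have hKint : IntegrableOn K (ball (0:E) e) :=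
    ((hJint.comp_smul (inv_ne_zero he.ne')).const_mul _).integrableOn
  set ν : Measure (EuclideanSpace ℝ (Fin d)) :=
    (volume.restrict (ball (0:E) e)).withDensity (fun z => ENNReal.ofReal (K z)) with hνdef
  have hprob : IsProbabilityMeasure ν := by
    constructor
    rw [hνdef, withDensity_apply _ MeasurableSet.univ, Measure.restrict_univ,
      ← ofReal_integral_eq_lintegral_ofReal hKint (ae_of_all _ hK0), hK1, ENNReal.ofReal_one]
  set g : E → ℝ := fun z => f x - f (x - z) with hgdef
  have hgm : Measurable g := measurable_const.sub (hf.comp (measurable_const.sub measurable_id))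
  have hiden : ∀ t : ℝ, ENNReal.ofReal (|t| ^ p) = ‖t‖ₑ ^ p := by
    intro t
    rw [← ENNReal.ofReal_rpow_of_nonneg (abs_nonneg t) hp0.le, ← Real.enorm_eq_ofReal_abs]
  have hmeas_gp : Measurable fun z => ENNReal.ofReal (|g z| ^ p) := by fun_prop
  have hRHS : (∫⁻ z in ball (0:E) e, ENNReal.ofReal (K z) * ENNReal.ofReal (|g z| ^ p))
      = ∫⁻ z, ENNReal.ofReal (|g z| ^ p) ∂ν := by
    rw [hνdef, lintegral_withDensity_eq_lintegral_mul _ (hKm.ennreal_ofReal) hmeas_gp]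
    rfl
  show ENNReal.ofReal (|f x - ∫ z in ball (0:E) e, K z * f (x - z)| ^ p)
      ≤ ∫⁻ z in ball (0:E) e, ENNReal.ofReal (K z) * ENNReal.ofReal (|g z| ^ p)
  rw [hRHS]
  by_cases hfin : (∫⁻ z, ENNReal.ofReal (|g z| ^ p) ∂ν) = ∞
  · rw [hfin]; exact le_top
  -- g ∈ L^p(ν)
  have hmem : MemLp g (ENNReal.ofReal p) ν := by
    refine ⟨hgm.aestronglyMeasurable, ?_⟩
    rw [eLpNorm_eq_lintegral_rpow_enorm_toReal (by simp [hp0]) (by simp), ENNReal.toReal_ofReal hp0.le]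
    refine ENNReal.rpow_lt_top_of_nonneg (by positivity) ?_
    simp_rw [← hiden]
    exact hfin
  have hgint : Integrable g ν := by
    have h1 : MemLp g 1 ν :=
      hmem.mono_exponent (ENNReal.one_le_ofReal.mpr hp.le)
    exact memLp_one_iff_integrable.mp h1
  -- convolution rewrite
  have hgK : Integrable (fun z => K z * g z) (volume.restrict (ball (0:E) e)) := by
    have h2 := (integrable_withDensity_iff hKm.ennreal_ofReal
        (ae_of_all _ fun z => ENNReal.ofReal_lt_top)).mp hgint
    have h3 : (fun z => g z * (ENNReal.ofReal (K z)).toReal) = fun z => K z * g z := by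
      ext z; rw [ENNReal.toReal_ofReal (hK0 z), mul_comm]
    rwa [h3] at h2
  have hKfx : Integrable (fun z => K z * f x) (volume.restrict (ball (0:E) e)) :=
    hKint.mul_const (f x)
  have hKf : Integrable (fun z => K z * f (x - z)) (volume.restrict (ball (0:E) e)) := by
    have h4 : (fun z => K z * f (x - z)) = fun z => K z * f x - K z * g z := by
      ext z; simp [hgdef]; ring
    rw [h4]; exact hKfx.sub hgK
  have hconv : f x - (∫ z in ball (0:E) e, K z * f (x - z)) = ∫ z, g z ∂ν := by
    have h5 : ∫ z, g z ∂ν = ∫ z in ball (0:E) e, K z * g z := by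
      rw [hνdef]
      have hcoe : ((fun z => ENNReal.ofReal (K z)) : E → ℝ≥0∞)
          = fun z => ((Real.toNNReal (K z) : ℝ≥0) : ℝ≥0∞) := rfl
      rw [hcoe, integral_withDensity_eq_integral_smul hKm.real_toNNReal g]
      congr 1
      ext z
      rw [NNReal.smul_def, smul_eq_mul, Real.coe_toNNReal _ (hK0 z)]
    rw [h5]
    have h6 : ∀ z, K z * g z = K z * f x - K z * f (x - z) := by intro z; simp [hgdef]; ring
    simp_rw [h6]
    rw [integral_sub hKfx hKf, integral_mul_const, hK1, one_mul]
  rw [hconv]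
  calc ENNReal.ofReal (|∫ z, g z ∂ν| ^ p)
      = ((‖∫ z, g z ∂ν‖₊ : ℝ≥0∞)) ^ p := hiden _
    _ ≤ (∫⁻ z, ‖g z‖₊ ∂ν) ^ p :=
        ENNReal.rpow_le_rpow (enorm_integral_le_lintegral_enorm g) hp0.le
    _ = (eLpNorm g 1 ν) ^ p := by rw [eLpNorm_one_eq_lintegral_enorm]; rfl
    _ ≤ (eLpNorm g (ENNReal.ofReal p) ν) ^ p :=
        ENNReal.rpow_le_rpow
          (eLpNorm_le_eLpNorm_of_exponent_le (ENNReal.one_le_ofReal.mpr hp.le)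
            hgm.aestronglyMeasurable) hp0.le
    _ = ∫⁻ z, ENNReal.ofReal (|g z| ^ p) ∂ν := by
        rw [eLpNorm_eq_lintegral_rpow_enorm_toReal (by simp [hp0]) (by simp),
          ENNReal.toReal_ofReal hp0.le, ← ENNReal.rpow_mul, one_div,
          inv_mul_cancel₀ hp0.ne', ENNReal.rpow_one]
        simp_rw [← hiden]

/-- mollification estimate from the nonlocal p-Dirichlet energy. If `J` is a
mollifier supported in the closed unit ball with `∫ J = 1` and `J ≤ C η(|·|)`, the weights
`ρ_n ≥ c > 0` on `Ω`, and the nonlocal energies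
`F_{ε_n}(f_n) = ε_n^{−p} ∬ η_{ε_n}(|x−z|)|f_n(x)−f_n(z)|^p ρ_n(x)ρ_n(z)` are uniformly
bounded with `ε_n → 0`, then for any `Ω'` compactly contained in `Ω` (with `closedBall x ε_n
⊆ Ω` for `x ∈ Ω'`), `‖f_n − J_{ε_n} ∗ f_n‖_{L^p(Ω')}^p ≤ (C ε_n^p / c²) F_{ε_n}(f_n)`, and in
particular `‖f_n − J_{ε_n} ∗ f_n‖_{L^p(Ω')} → 0`. -/
theorem stmt7 (d : ℕ) (hd : 0 < d) (p : ℝ) (hp : 1 < p)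
    (Ω Ω' : Set (EuclideanSpace ℝ (Fin d))) (hΩo : IsOpen Ω) (hΩb : Bornology.IsBounded Ω)
    (hΩ'sub : Ω' ⊆ Ω) (hΩ'cpt : IsCompact (closure Ω')) (hΩ'cl : closure Ω' ⊆ Ω)
    (r : ℝ) (hr : 0 < r) (hΩ'r : ∀ x ∈ Ω', closedBall x r ⊆ Ω)
    (η : ℝ → ℝ) (hηm : Measurable η) (hη0 : ∀ s, 0 ≤ η s)
    (hηdec : ∀ a b : ℝ, 0 ≤ a → a ≤ b → η b ≤ η a) (hηpos : 0 < η 0)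
    (J : EuclideanSpace ℝ (Fin d) → ℝ) (hJm : Measurable J) (hJ0 : ∀ z, 0 ≤ J z)
    (hJsupp : Function.support J ⊆ closedBall 0 1) (hJint : Integrable J)
    (hJ1 : (∫ z, J z) = 1)
    (C : ℝ) (hC : 0 < C) (hJη : ∀ z : EuclideanSpace ℝ (Fin d), J z ≤ C * η ‖z‖)
    (c : ℝ) (hc : 0 < c)
    (ρn : ℕ → EuclideanSpace ℝ (Fin d) → ℝ) (hρnm : ∀ n, Measurable (ρn n))
    (hρlb : ∀ n, ∀ x ∈ Ω, c ≤ ρn n x)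
    (fn : ℕ → EuclideanSpace ℝ (Fin d) → ℝ) (hfnm : ∀ n, Measurable (fn n))
    (ε : ℕ → ℝ) (hε : ∀ n, 0 < ε n) (hε0 : Tendsto ε atTop (𝓝 0))
    (F : ℕ → ℝ≥0∞)
    (hF : ∀ n, F n = (ENNReal.ofReal (ε n ^ p))⁻¹ *
      ∫⁻ x in Ω, ∫⁻ z in Ω, ENNReal.ofReal
        ((ε n) ^ (-(d : ℝ)) * η (‖x - z‖ / ε n) * |fn n x - fn n z| ^ p *
          ρn n x * ρn n z))
    (B : ℝ≥0) (hFbd : ∀ n, F n ≤ B) :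
    (∀ n, (∀ x ∈ Ω', closedBall x (ε n) ⊆ Ω) →
      (∫⁻ x in Ω', ENNReal.ofReal
          (|fn n x - ∫ z in ball (0 : EuclideanSpace ℝ (Fin d)) (ε n),
              (ε n) ^ (-(d : ℝ)) * J ((ε n)⁻¹ • z) * fn n (x - z)| ^ p)) ≤
        ENNReal.ofReal (C * ε n ^ p / c ^ 2) * F n) ∧
    Tendsto (fun n => ∫⁻ x in Ω', ENNReal.ofReal
        (|fn n x - ∫ z in ball (0 : EuclideanSpace ℝ (Fin d)) (ε n),
            (ε n) ^ (-(d : ℝ)) * J ((ε n)⁻¹ • z) * fn n (x - z)| ^ p))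
      atTop (𝓝 0) := by
  have hp0 : (0:ℝ) < p := lt_trans one_pos hp
  have part1 : ∀ n, (∀ x ∈ Ω', closedBall x (ε n) ⊆ Ω) →
      (∫⁻ x in Ω', ENNReal.ofReal
          (|fn n x - ∫ z in ball (0 : EuclideanSpace ℝ (Fin d)) (ε n),
              (ε n) ^ (-(d : ℝ)) * J ((ε n)⁻¹ • z) * fn n (x - z)| ^ p)) ≤
        ENNReal.ofReal (C * ε n ^ p / c ^ 2) * F n := by
    intro n hball
    have hen : 0 < ε n := hε n
    have hK1 := aux_K_integral hd (ε n) hen J hJsupp hJint hJ1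
    set P : EuclideanSpace ℝ (Fin d) → EuclideanSpace ℝ (Fin d) → ℝ≥0∞ := fun x w =>
      ENNReal.ofReal ((ε n) ^ (-(d : ℝ)) * η (‖x - w‖ / ε n) * |fn n x - fn n w| ^ p *
        ρn n x * ρn n w) with hPdef
    set I : EuclideanSpace ℝ (Fin d) → EuclideanSpace ℝ (Fin d) → ℝ≥0∞ := fun x w =>
      ENNReal.ofReal ((ε n) ^ (-(d : ℝ)) * η (‖x - w‖ / ε n) * |fn n x - fn n w| ^ p) with hIdef
    have stepA : (∫⁻ x in Ω', ENNReal.ofReal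
          (|fn n x - ∫ z in ball (0 : EuclideanSpace ℝ (Fin d)) (ε n),
              (ε n) ^ (-(d : ℝ)) * J ((ε n)⁻¹ • z) * fn n (x - z)| ^ p)) ≤
        ∫⁻ x in Ω', ∫⁻ z in ball (0 : EuclideanSpace ℝ (Fin d)) (ε n),
          ENNReal.ofReal ((ε n) ^ (-(d : ℝ)) * J ((ε n)⁻¹ • z)) *
            ENNReal.ofReal (|fn n x - fn n (x - z)| ^ p) :=
      lintegral_mono fun x =>
        aux_jensen hd (ε n) hen p hp J hJm hJ0 hJsupp hJint hJ1 (fn n) (hfnm n) x hK1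
    have hnorm : ∀ z : EuclideanSpace ℝ (Fin d), ‖(ε n)⁻¹ • z‖ = ‖z‖ / ε n := by
      intro z
      rw [norm_smul, norm_inv, Real.norm_eq_abs, abs_of_pos hen, div_eq_inv_mul]
    have hrd0 : (0:ℝ) ≤ (ε n) ^ (-(d:ℝ)) := Real.rpow_nonneg hen.le _
    have stepB : ∀ x z : EuclideanSpace ℝ (Fin d),
        ENNReal.ofReal ((ε n) ^ (-(d : ℝ)) * J ((ε n)⁻¹ • z)) *
          ENNReal.ofReal (|fn n x - fn n (x - z)| ^ p) ≤ ENNReal.ofReal C * I x (x - z) := by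
      intro x z
      have hJb : (ε n) ^ (-(d:ℝ)) * J ((ε n)⁻¹ • z) ≤ C * ((ε n) ^ (-(d:ℝ)) * η (‖z‖ / ε n)) := by
        have h1 := hJη ((ε n)⁻¹ • z)
        rw [hnorm z] at h1
        nlinarith [h1, hrd0]
      calc ENNReal.ofReal ((ε n) ^ (-(d : ℝ)) * J ((ε n)⁻¹ • z)) *
            ENNReal.ofReal (|fn n x - fn n (x - z)| ^ p)
          ≤ (ENNReal.ofReal C * ENNReal.ofReal ((ε n) ^ (-(d:ℝ)) * η (‖z‖ / ε n))) *
            ENNReal.ofReal (|fn n x - fn n (x - z)| ^ p) := by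
            refine mul_le_mul_left ?_ _
            refine le_trans (ENNReal.ofReal_le_ofReal hJb) (le_of_eq (ENNReal.ofReal_mul hC.le))
        _ = ENNReal.ofReal C * I x (x - z) := by
            have hIz : I x (x - z) = ENNReal.ofReal
                ((ε n) ^ (-(d:ℝ)) * η (‖z‖ / ε n) * |fn n x - fn n (x - z)| ^ p) := by
              have harg : x - (x - z) = z := sub_sub_cancel x z
              simp only [hIdef, harg]
            rw [hIz, mul_assoc, ← ENNReal.ofReal_mul (mul_nonneg hrd0 (hη0 _))]
    have stepB' : ∀ x : EuclideanSpace ℝ (Fin d),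
        (∫⁻ z in ball (0 : EuclideanSpace ℝ (Fin d)) (ε n),
          ENNReal.ofReal ((ε n) ^ (-(d : ℝ)) * J ((ε n)⁻¹ • z)) *
            ENNReal.ofReal (|fn n x - fn n (x - z)| ^ p))
          ≤ ENNReal.ofReal C *
            ∫⁻ z in ball (0 : EuclideanSpace ℝ (Fin d)) (ε n), I x (x - z) := by
      intro x
      rw [← lintegral_const_mul' _ _ ENNReal.ofReal_ne_top]
      exact lintegral_mono fun z => stepB x z
    have stepC : ∀ x : EuclideanSpace ℝ (Fin d),
        (∫⁻ z in ball (0 : EuclideanSpace ℝ (Fin d)) (ε n), I x (x - z))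
          = ∫⁻ w in ball x (ε n), I x w := by
      intro x
      have hmp : MeasurePreserving (fun z : EuclideanSpace ℝ (Fin d) => x - z) volume volume := by
        have h := (measurePreserving_add_left (volume : Measure (EuclideanSpace ℝ (Fin d))) x).comp
          (Measure.measurePreserving_neg volume)
        simpa [Function.comp_def, sub_eq_add_neg] using h
      have hemb : MeasurableEmbedding (fun z : EuclideanSpace ℝ (Fin d) => x - z) :=
        (MeasurableEquiv.subLeft x).measurableEmbedding
      have himg : (fun z : EuclideanSpace ℝ (Fin d) => x - z) '' ball 0 (ε n) = ball x (ε n) := by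
        ext w
        constructor
        · rintro ⟨z, hz, rfl⟩
          simpa [mem_ball, dist_eq_norm, norm_sub_rev] using mem_ball_zero_iff.mp hz
        · intro hw
          refine ⟨x - w, ?_, sub_sub_cancel x w⟩
          simpa [mem_ball_zero_iff, norm_sub_rev] using mem_ball_iff_norm.mp hw
      rw [MeasurePreserving.setLIntegral_comp_emb hmp hemb (I x) (ball 0 (ε n)), himg]
    have stepD : ∀ x ∈ Ω', (∫⁻ w in ball x (ε n), I x w) ≤ ∫⁻ w in Ω, I x w := fun x hx =>
      lintegral_mono' (Measure.restrict_mono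
        (subset_trans ball_subset_closedBall (hball x hx)) le_rfl) le_rfl
    have hc2 : (0:ℝ) < c ^ 2 := by positivity
    have hc2ne : ENNReal.ofReal (c ^ 2) ≠ 0 := (ENNReal.ofReal_pos.mpr hc2).ne'
    have hPm : ∀ x, Measurable fun w => P x w := by
      intro x
      rw [hPdef]
      have hη' := hηm
      have hf' := hfnm n
      have hρ' := hρnm n
      fun_prop
    have stepE : ∀ x ∈ Ω, (∫⁻ w in Ω, I x w) ≤
        (ENNReal.ofReal (c ^ 2))⁻¹ * ∫⁻ w in Ω, P x w := by
      intro x hx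
      have hpt : ∀ w ∈ Ω, ENNReal.ofReal (c ^ 2) * I x w ≤ P x w := by
        intro w hw
        rw [hIdef, hPdef, ← ENNReal.ofReal_mul hc2.le]
        apply ENNReal.ofReal_le_ofReal
        have ha : (0:ℝ) ≤ (ε n) ^ (-(d:ℝ)) * η (‖x - w‖ / ε n) * |fn n x - fn n w| ^ p := by
          have := hη0 (‖x - w‖ / ε n)
          positivity
        have h1 := hρlb n x hx
        have h2 := hρlb n w hw
        have h3 : c * c ≤ ρn n x * ρn n w :=
          mul_le_mul h1 h2 hc.le (le_trans hc.le h1)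
        have key := mul_le_mul_of_nonneg_left h3 ha
        nlinarith [key]
      calc (∫⁻ w in Ω, I x w)
          = (ENNReal.ofReal (c ^ 2))⁻¹ * (ENNReal.ofReal (c ^ 2) * ∫⁻ w in Ω, I x w) := by
            rw [← mul_assoc, ENNReal.inv_mul_cancel hc2ne ENNReal.ofReal_ne_top, one_mul]
        _ ≤ (ENNReal.ofReal (c ^ 2))⁻¹ * ∫⁻ w in Ω, P x w := by
            refine mul_le_mul_right ?_ _
            rw [← lintegral_const_mul' _ _ ENNReal.ofReal_ne_top]
            exact setLIntegral_mono (hPm x) hpt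
    have houter : Measurable fun x : EuclideanSpace ℝ (Fin d) =>
        ENNReal.ofReal C * (ENNReal.ofReal (c ^ 2))⁻¹ * ∫⁻ w in Ω, P x w := by
      have mq : Measurable (Function.uncurry P) := by
        simp only [hPdef, Function.uncurry]
        have hη' := hηm
        have hf' := hfnm n
        have hρ' := hρnm n
        fun_prop
      exact (Measurable.lintegral_prod_right mq).const_mul _
    calc (∫⁻ x in Ω', ENNReal.ofReal
          (|fn n x - ∫ z in ball (0 : EuclideanSpace ℝ (Fin d)) (ε n),
              (ε n) ^ (-(d : ℝ)) * J ((ε n)⁻¹ • z) * fn n (x - z)| ^ p))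
        ≤ ∫⁻ x in Ω', ∫⁻ z in ball (0 : EuclideanSpace ℝ (Fin d)) (ε n),
          ENNReal.ofReal ((ε n) ^ (-(d : ℝ)) * J ((ε n)⁻¹ • z)) *
            ENNReal.ofReal (|fn n x - fn n (x - z)| ^ p) := stepA
      _ ≤ ∫⁻ x in Ω', ENNReal.ofReal C * (ENNReal.ofReal (c ^ 2))⁻¹ * ∫⁻ w in Ω, P x w := by
          refine setLIntegral_mono houter ?_
          intro x hx
          refine le_trans (stepB' x) ?_
          rw [stepC x, mul_assoc]
          refine mul_le_mul_right ?_ _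
          refine le_trans (le_trans (stepD x hx) (stepE x (hΩ'sub hx))) le_rfl
      _ = ENNReal.ofReal C * (ENNReal.ofReal (c ^ 2))⁻¹ *
            ∫⁻ x in Ω', ∫⁻ w in Ω, P x w := lintegral_const_mul' _ _ (by
              exact ENNReal.mul_ne_top ENNReal.ofReal_ne_top (ENNReal.inv_ne_top.mpr hc2ne))
      _ ≤ ENNReal.ofReal C * (ENNReal.ofReal (c ^ 2))⁻¹ *
            ∫⁻ x in Ω, ∫⁻ w in Ω, P x w := by
          refine mul_le_mul_right ?_ _
          exact lintegral_mono' (Measure.restrict_mono hΩ'sub le_rfl) le_rfl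
      _ = ENNReal.ofReal C * (ENNReal.ofReal (c ^ 2))⁻¹ * (ENNReal.ofReal (ε n ^ p) * F n) := by
          congr 1
          have hepne : ENNReal.ofReal (ε n ^ p) ≠ 0 :=
            (ENNReal.ofReal_pos.mpr (Real.rpow_pos_of_pos hen p)).ne'
          rw [hF n, ← mul_assoc, ENNReal.mul_inv_cancel hepne ENNReal.ofReal_ne_top, one_mul]
      _ = ENNReal.ofReal (C * ε n ^ p / c ^ 2) * F n := by
          rw [ENNReal.ofReal_div_of_pos hc2, ENNReal.ofReal_mul hC.le, div_eq_mul_inv]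
          ring
  refine ⟨part1, ?_⟩
  have hupper : ∀ᶠ n in atTop, (∫⁻ x in Ω', ENNReal.ofReal
        (|fn n x - ∫ z in ball (0 : EuclideanSpace ℝ (Fin d)) (ε n),
            (ε n) ^ (-(d : ℝ)) * J ((ε n)⁻¹ • z) * fn n (x - z)| ^ p)) ≤
      ENNReal.ofReal (C * ε n ^ p / c ^ 2) * (B : ℝ≥0∞) := by
    filter_upwards [hε0.eventually_lt_const hr] with n hlt
    refine le_trans (part1 n fun x hx =>
      subset_trans (closedBall_subset_closedBall hlt.le) (hΩ'r x hx)) ?_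
    exact mul_le_mul' le_rfl (hFbd n)
  have hlim : Tendsto (fun n => ENNReal.ofReal (C * ε n ^ p / c ^ 2) * (B : ℝ≥0∞))
      atTop (𝓝 0) := by
    have h1 : Tendsto (fun n => C * ε n ^ p / c ^ 2) atTop (𝓝 0) := by
      have h2 : Tendsto (fun n => ε n ^ p) atTop (𝓝 0) := by
        have hcont : ContinuousAt (fun x : ℝ => x ^ p) 0 :=
          Real.continuousAt_rpow_const 0 p (Or.inr hp0.le)
        have := hcont.tendsto.comp hε0
        rwa [Real.zero_rpow hp0.ne'] at this
      have h3 := (h2.const_mul C).div_const (c ^ 2)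
      simpa using h3
    have h4 := ENNReal.tendsto_ofReal h1
    rw [ENNReal.ofReal_zero] at h4
    have h5 := ENNReal.Tendsto.mul_const (b := (B : ℝ≥0∞)) h4 (Or.inr ENNReal.coe_ne_top)
    simpa using h5
  exact tendsto_of_tendsto_of_tendsto_of_le_of_le' tendsto_const_nhds hlim
    (Eventually.of_forall fun n => zero_le) hupper
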